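/- For every integer m ≥ 1, the set CBFS₂(2m+1) is a non-expandable cross-bifix-free set on BF₂(2m+1); that is, for every bifix-free binary word γ of length 2m+1 with γ ∉ CBFS₂(2m+1), there exists ω ∈ CBFS₂(2m+1) such that some nonempty proper prefix of γ is a suffix of ω, or some nonempty proper prefix of ω is a suffix of γ. -/

import Mathlib

/-- A binary word (as a list of Booleans, `true` = 1, `false` = 0) is a Dyck word
if it has as many 1s as 0s and every prefix has at least as many 1s as 0s. -/
def IsDyck (w : List Bool) : Prop :=
  w.count true = w.count false ∧
  ∀ p : List Bool, p <+: w → p.count false ≤ p.count true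

/-- `DyckLen w n` : `w` is a Dyck word of length `n`. -/
def DyckLen (w : List Bool) (n : ℕ) : Prop := IsDyck w ∧ w.length = n

/-- A word is bifix-free if no nonempty proper prefix of it is also a suffix of it. -/
def BifixFree {A : Type*} (w : List A) : Prop :=
  ∀ p : List A, p ≠ [] → p <+: w → p ≠ w → ¬ p <:+ w

/-- Two (distinct, same-length) words are cross-bifix-free if no nonempty proper
prefix of either one is a suffix of the other. -/
def CrossBifixFree {A : Type*} (w w' : List A) : Prop :=
  (∀ p : List A, p ≠ [] → p <+: w → p ≠ w → ¬ p <:+ w') ∧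
  (∀ p : List A, p ≠ [] → p <+: w' → p ≠ w' → ¬ p <:+ w)

/-- The set of bifix-free binary words of length `n`. -/
def BF (n : ℕ) : Set (List Bool) := {w | w.length = n ∧ BifixFree w}

/-- `CBFS₂(2m+1)` : words `1·α` where `α` is a Dyck word of length `2m`. -/
def CBFSodd (m : ℕ) : Set (List Bool) :=
  {w | ∃ α : List Bool, DyckLen α (2 * m) ∧ w = true :: α}

/-- `CBFS₂(2m+2)` for even `m > 1` : words `α·1·β·0` with `α` a Dyck word of length `2i`,
`β` a Dyck word of length `2(m-i)`, `0 ≤ i ≤ m/2`. -/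
def CBFSevenE (m : ℕ) : Set (List Bool) :=
  {w | ∃ (i : ℕ) (α β : List Bool), i ≤ m / 2 ∧ DyckLen α (2 * i) ∧
    DyckLen β (2 * (m - i)) ∧ w = α ++ true :: β ++ [false]}

/-- `CBFS₂(2m+2)` for odd `m ≥ 1` : words `α·1·β·0` with `α` a Dyck word of length `2i`,
`β` a Dyck word of length `2(m-i)`, `0 ≤ i ≤ (m+1)/2`, excluding the words
`1·α'·0·1·β'·0` with `α'`, `β'` Dyck words of length `m-1`. -/
def CBFSevenO (m : ℕ) : Set (List Bool) :=
  {w | ∃ (i : ℕ) (α β : List Bool), i ≤ (m + 1) / 2 ∧ DyckLen α (2 * i) ∧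
    DyckLen β (2 * (m - i)) ∧ w = α ++ true :: β ++ [false]} \
  {w | ∃ α' β' : List Bool, DyckLen α' (m - 1) ∧ DyckLen β' (m - 1) ∧
    w = true :: α' ++ false :: true :: β' ++ [false]}

namespace CBFS

/-- height of a word -/
def ht (w : List Bool) : ℤ := (w.count true : ℤ) - w.count false

lemma count_tf (w : List Bool) : w.count true + w.count false = w.length := by
  induction w with
  | nil => simp
  | cons a l ih => cases a <;> simp [List.count_cons] <;> omega

lemma ht_eq (w : List Bool) : ht w = (w.length : ℤ) - 2 * w.count false := by
  have := count_tf w; unfold ht; omega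

lemma ht_le_length (w : List Bool) : ht w ≤ (w.length : ℤ) := by
  have := (List.count_le_length : List.count true w ≤ w.length); unfold ht; omega

lemma ht_append (a b : List Bool) : ht (a ++ b) = ht a + ht b := by
  unfold ht; simp [List.count_append]; push_cast; ring

lemma ht_nil : ht [] = 0 := by simp [ht]

lemma ht_cons_true (l : List Bool) : ht (true :: l) = ht l + 1 := by
  unfold ht; simp [List.count_cons]; push_cast; ring

lemma ht_cons_false (l : List Bool) : ht (false :: l) = ht l - 1 := by
  unfold ht; simp [List.count_cons]; push_cast; ring

lemma ht_single (x : Bool) : ht [x] = if x then 1 else -1 := by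
  cases x <;> simp [ht, List.count_cons]

lemma isDyck_iff (w : List Bool) :
    IsDyck w ↔ ht w = 0 ∧ ∀ p, p <+: w → 0 ≤ ht p := by
  unfold IsDyck ht
  constructor
  · rintro ⟨h1, h2⟩
    exact ⟨by omega, fun p hp => by have := h2 p hp; omega⟩
  · rintro ⟨h1, h2⟩
    exact ⟨by omega, fun p hp => by have := h2 p hp; omega⟩

/-- (10)^k -/
def rep01 : ℕ → List Bool
  | 0 => []
  | (k+1) => true :: false :: rep01 k

lemma rep01_length (k : ℕ) : (rep01 k).length = 2 * k := by
  induction k with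
  | zero => simp [rep01]
  | succ k ih => simp [rep01, ih]; omega

lemma rep01_ht (k : ℕ) : ht (rep01 k) = 0 := by
  induction k with
  | zero => simp [rep01, ht_nil]
  | succ k ih => simp [rep01, ht_cons_true, ht_cons_false, ih]

lemma rep01_prefix_ht (k : ℕ) : ∀ p, p <+: rep01 k → 0 ≤ ht p := by
  induction k with
  | zero => intro p hp; simp [rep01] at hp; simp [hp, ht_nil]
  | succ k ih =>
    intro p hp
    rcases p with _ | ⟨a, p⟩
    · simp [ht_nil]
    · rw [rep01, List.cons_prefix_cons] at hp
      obtain ⟨rfl, hp⟩ := hp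
      rcases p with _ | ⟨b, p⟩
      · simp [ht_cons_true, ht_nil]
      · rw [List.cons_prefix_cons] at hp
        obtain ⟨rfl, hp⟩ := hp
        have := ih p hp
        rw [ht_cons_true, ht_cons_false]; omega

lemma rep01_dyck (k : ℕ) : IsDyck (rep01 k) :=
  (isDyck_iff _).mpr ⟨rep01_ht k, rep01_prefix_ht k⟩

lemma prefix_append_cases {α : Type*} {p a b : List α} (h : p <+: a ++ b) :
    p <+: a ∨ ∃ q, q <+: b ∧ p = a ++ q := by
  by_cases hl : p.length ≤ a.length
  · exact Or.inl (List.prefix_of_prefix_length_le h (a.prefix_append b) hl)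
  · right
    have hap : a <+: p :=
      List.prefix_of_prefix_length_le (a.prefix_append b) h (le_of_not_ge hl)
    obtain ⟨q, rfl⟩ := hap
    exact ⟨q, (List.prefix_append_right_inj a).mp h, rfl⟩

lemma ht_replicate_false (d : ℕ) : ht (List.replicate d false) = -d := by
  unfold ht; simp [List.count_replicate]

lemma isDyck_append {a b : List Bool} (ha : IsDyck a) (hb : IsDyck b) :
    IsDyck (a ++ b) := by
  rw [isDyck_iff] at *
  obtain ⟨ha1, ha2⟩ := ha; obtain ⟨hb1, hb2⟩ := hb
  refine ⟨by rw [ht_append, ha1, hb1]; ring, fun p hp => ?_⟩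
  rcases prefix_append_cases hp with h | ⟨q, hq, rfl⟩
  · exact ha2 p h
  · rw [ht_append, ha1]; simpa using hb2 q hq

lemma extend_dyck (t : List Bool) (hpre : ∀ p, p <+: t → 0 ≤ ht p)
    (d k : ℕ) (hd : ht t = d) :
    DyckLen (t ++ (List.replicate d false ++ rep01 k)) (t.length + d + 2 * k) := by
  constructor
  · rw [isDyck_iff]
    constructor
    · rw [ht_append, ht_append, hd, rep01_ht, ht_replicate_false]; ring
    · intro p hp
      rcases prefix_append_cases hp with h | ⟨q, hq, rfl⟩
      · exact hpre _ h
      · rw [ht_append, hd]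
        rcases prefix_append_cases hq with h2 | ⟨r, hr, rfl⟩
        · have hq' : q = List.replicate q.length false :=
            List.eq_replicate_length.mpr (fun b hb =>
              List.eq_of_mem_replicate (h2.sublist.mem hb))
          have hlen : q.length ≤ d := by
            simpa using h2.length_le
          rw [hq', ht_replicate_false]
          push_cast; omega
        · rw [ht_append, ht_replicate_false]
          have := rep01_prefix_ht k r hr
          omega
  · simp [rep01_length]; ring

lemma ivt_up (f : ℕ → ℤ) (hstep : ∀ i, f (i+1) ≤ f i + 1) (c : ℤ)
    (a b : ℕ) (hab : a ≤ b) (ha : f a ≤ c) (hb : c ≤ f b) :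
    ∃ j, a ≤ j ∧ j ≤ b ∧ f j = c := by
  induction b, hab using Nat.le_induction with
  | base => exact ⟨a, le_refl a, le_refl a, le_antisymm ha hb⟩
  | succ b hab ih =>
    by_cases hc : c ≤ f b
    · obtain ⟨j, h1, h2, h3⟩ := ih hc
      exact ⟨j, h1, by omega, h3⟩
    · exact ⟨b + 1, by omega, le_refl _, by have := hstep b; omega⟩

lemma take_step (g : List Bool) (i : ℕ) (h : i < g.length) :
    (ht (g.take (i+1)) = ht (g.take i) + 1 ∧ g.drop i = true :: g.drop (i+1)) ∨
    (ht (g.take (i+1)) = ht (g.take i) - 1 ∧ g.drop i = false :: g.drop (i+1)) := by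
  have h1 : g.take (i+1) = g.take i ++ [g[i]] := by
    rw [List.take_succ, List.getElem?_eq_getElem h]; rfl
  have h2 : g.drop i = g[i] :: g.drop (i+1) := List.drop_eq_getElem_cons h
  cases hg : g[i] with
  | true => left; rw [hg] at h1 h2
            exact ⟨by rw [h1, ht_append, ht_single]; simp, h2⟩
  | false => right; rw [hg] at h1 h2
             refine ⟨by rw [h1, ht_append, ht_single]; simp; ring, h2⟩

lemma suffix_cons_of_suffix {l t : List Bool} (a : Bool) (h : l <:+ t) :
    l <:+ a :: t := h.trans (List.suffix_cons a t)

lemma rep01_suffix_false (k : ℕ) (hk : 1 ≤ k) : [false] <:+ rep01 k := by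
  induction k with
  | zero => omega
  | succ k ih =>
    rcases Nat.eq_zero_or_pos k with rfl | hk'
    · exact ⟨[true], rfl⟩
    · exact suffix_cons_of_suffix true (suffix_cons_of_suffix false (ih hk'))

end CBFS

/-- For every `m ≥ 1`, `CBFS₂(2m+1)` is a non-expandable cross-bifix-free set
on `BF₂(2m+1)`. -/
theorem CBFSodd_nonexpandable (m : ℕ) (hm : 1 ≤ m) (γ : List Bool)
    (hγ : γ ∈ BF (2 * m + 1)) (hγn : γ ∉ CBFSodd m) :
    ∃ ω ∈ CBFSodd m,
      (∃ p : List Bool, p ≠ [] ∧ p <+: γ ∧ p ≠ γ ∧ p <:+ ω) ∨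
      (∃ p : List Bool, p ≠ [] ∧ p <+: ω ∧ p ≠ ω ∧ p <:+ γ) := by
  classical
  obtain ⟨hlen, hbf⟩ := hγ
  rcases γ with _ | ⟨b, δ⟩
  · simp at hlen
  cases b
  case false =>
    refine ⟨true :: CBFS.rep01 m,
      ⟨CBFS.rep01 m, ⟨CBFS.rep01_dyck m, CBFS.rep01_length m⟩, rfl⟩,
      Or.inl ⟨[false], by simp, List.cons_prefix_cons.mpr ⟨rfl, List.nil_prefix⟩, ?_, ?_⟩⟩
    · intro h
      apply_fun List.length at h
      simp only [List.length_cons, List.length_nil] at h hlen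
      omega
    · exact CBFS.suffix_cons_of_suffix true (CBFS.rep01_suffix_false m hm)
  case true =>
    set F : ℕ → ℤ := fun j => CBFS.ht ((true :: δ).take j) with hF
    have hF0 : F 0 = 0 := by
      show CBFS.ht ((true :: δ).take 0) = 0
      simp [CBFS.ht_nil]
    have hF1 : F 1 = 1 := by
      show CBFS.ht ((true :: δ).take 1) = 1
      simp [CBFS.ht_cons_true, CBFS.ht_nil]
    have hstep' : ∀ i, F (i+1) ≤ F i + 1 := by
      intro i
      by_cases h : i < (true::δ).length
      · rcases CBFS.take_step _ i h with ⟨he, _⟩ | ⟨he, _⟩ <;>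
        · have he' : F (i+1) = F i + 1 ∨ F (i+1) = F i - 1 := by
            first
              | exact Or.inl he
              | exact Or.inr he
          omega
      · push_neg at h
        have h2 : (true::δ).length ≤ i + 1 := by omega
        have : F (i+1) = F i := by
          show CBFS.ht ((true :: δ).take (i+1)) = CBFS.ht ((true :: δ).take i)
          rw [List.take_of_length_le h, List.take_of_length_le h2]
        omega
    have htake_n : (true::δ).take (2*m+1) = true :: δ := by
      rw [← hlen]; exact List.take_length
    have hFn_eq : F (2*m+1) = CBFS.ht (true::δ) := by
      show CBFS.ht ((true :: δ).take (2*m+1)) = CBFS.ht (true::δ)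
      rw [htake_n]
    by_cases hB : ∃ i, 1 ≤ i ∧ i ≤ 2*m+1 ∧ F i ≤ 0
    · -- some prefix height hits 0 : shortest balanced prefix is a Dyck word
      set i0 := Nat.find hB with hi0def
      have hi0_1 : 1 ≤ i0 := (Nat.find_spec hB).1
      have hi0_n : i0 ≤ 2*m+1 := (Nat.find_spec hB).2.1
      have hi0_le : F i0 ≤ 0 := (Nat.find_spec hB).2.2
      have hpos : ∀ j, 1 ≤ j → j < i0 → 1 ≤ F j := by
        intro j h1 h2
        by_contra hcon
        exact Nat.find_min hB h2 ⟨h1, by omega, by omega⟩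
      have hi0_2 : 2 ≤ i0 := by
        rcases Nat.lt_or_ge i0 2 with h | h
        · have : i0 = 1 := by omega
          rw [this] at hi0_le; omega
        · exact h
      have hFi0 : F i0 = 0 := by
        have hlt : i0 - 1 < (true::δ).length := by
          simp only [List.length_cons] at hlen ⊢; omega
        have hstep2 := CBFS.take_step (true::δ) (i0-1) hlt
        have hi0e : i0 - 1 + 1 = i0 := by omega
        have hprev : 1 ≤ F (i0 - 1) := hpos _ (by omega) (by omega)
        rcases hstep2 with ⟨he, _⟩ | ⟨he, _⟩ <;>
        · have he' : F (i0-1+1) = F (i0-1) + 1 ∨ F (i0-1+1) = F (i0-1) - 1 := by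
            first
              | exact Or.inl he
              | exact Or.inr he
          rw [hi0e] at he'
          omega
      set p := (true::δ).take i0 with hpdef
      have hplen : p.length = i0 := by
        rw [hpdef]; simp only [List.length_take, List.length_cons] at hlen ⊢; omega
      have hhtp : CBFS.ht p = 0 := hFi0
      have hdp : IsDyck p := by
        rw [CBFS.isDyck_iff]
        refine ⟨hhtp, fun q hq => ?_⟩
        have hqg : q <+: (true::δ) := hq.trans (List.take_prefix _ _)
        have hq2 : q = (true::δ).take q.length := List.prefix_iff_eq_take.mp hqg
        have hqF : CBFS.ht q = F q.length := by
          have h' := congrArg CBFS.ht hq2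
          exact h'
        have hjle : q.length ≤ i0 := by
          have := hq.length_le; omega
        rcases Nat.eq_zero_or_pos q.length with h0 | h1
        · rw [hqF, h0]; omega
        · rcases eq_or_lt_of_le hjle with heq | hlt
          · rw [hqF, heq]; omega
          · have := hpos q.length h1 hlt; omega
      have hcf : CBFS.ht p = (p.length : ℤ) - 2 * p.count false := CBFS.ht_eq p
      set a := p.count false with hadef
      have hia : i0 = 2 * a := by omega
      have ham : a ≤ m := by omega
      have hαd : IsDyck (CBFS.rep01 (m - a) ++ p) :=
        CBFS.isDyck_append (CBFS.rep01_dyck _) hdp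
      have hαl : (CBFS.rep01 (m - a) ++ p).length = 2 * m := by
        simp [CBFS.rep01_length, hplen]; omega
      refine ⟨true :: (CBFS.rep01 (m - a) ++ p),
        ⟨CBFS.rep01 (m - a) ++ p, ⟨hαd, hαl⟩, rfl⟩,
        Or.inl ⟨p, ?_, List.take_prefix _ _, ?_, ?_⟩⟩
      · have : 0 < p.length := by omega
        exact List.ne_nil_of_length_pos this
      · intro h
        apply_fun List.length at h
        rw [hplen] at h
        simp only [List.length_cons] at hlen h
        omega
      · exact CBFS.suffix_cons_of_suffix true (List.suffix_append _ p)
    · -- all prefix heights ≥ 1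
      push_neg at hB
      have hFn1 : F (2*m+1) ≠ 1 := by
        intro h1
        apply hγn
        have hhtδ : CBFS.ht δ = 0 := by
          have := hFn_eq
          rw [CBFS.ht_cons_true] at this
          omega
        refine ⟨δ, ⟨(CBFS.isDyck_iff δ).mpr ⟨hhtδ, ?_⟩, ?_⟩, rfl⟩
        · intro q hq
          have hq' : true :: q <+: true :: δ := List.cons_prefix_cons.mpr ⟨rfl, hq⟩
          have hq2 : true :: q = (true::δ).take ((true::q).length) :=
            List.prefix_iff_eq_take.mp hq'
          have hlenq : (true::q).length ≤ 2*m+1 := by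
            have := hq'.length_le
            simp only [List.length_cons] at hlen this ⊢
            omega
          have hpos := hB (true::q).length (by simp) hlenq
          have hqF : F (true::q).length = CBFS.ht (true :: q) := by
            have h' := congrArg CBFS.ht hq2
            exact h'.symm
          rw [CBFS.ht_cons_true] at hqF
          omega
        · simp only [List.length_cons] at hlen; omega
      have hFn_pos := hB (2*m+1) (by omega) (le_refl _)
      have hhtg : CBFS.ht (true::δ) = ((true::δ).length : ℤ) - 2 * (true::δ).count false :=
        CBFS.ht_eq _
      rw [hlen] at hhtg
      obtain ⟨c, hc1, hc2⟩ : ∃ c : ℤ, F (2*m+1) = 2*c+1 ∧ 1 ≤ c := by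
        refine ⟨(m : ℤ) - (true::δ).count false, ?_, ?_⟩ <;>
          · rw [hFn_eq] at *
            push_cast at hhtg ⊢
            omega
      obtain ⟨j, hj1, hj2, hj3⟩ :=
        CBFS.ivt_up F hstep' c 1 (2*m+1) (by omega) (by omega) (by omega)
      set i := Nat.findGreatest (fun j => F j = c) (2*m+1) with hidef
      have hFi : F i = c := Nat.findGreatest_spec (P := fun j => F j = c) hj2 hj3
      have hin : i ≤ 2*m+1 := Nat.findGreatest_le (P := fun j => F j = c) _
      have hi1 : 1 ≤ i := by
        by_contra h
        have : i = 0 := by omega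
        rw [this] at hFi
        omega
      have hiltn : i < 2*m+1 := by
        rcases eq_or_lt_of_le hin with heq | hlt
        · rw [heq] at hFi; omega
        · exact hlt
      have hafter : ∀ k, i < k → k ≤ 2*m+1 → c + 1 ≤ F k := by
        intro k hk1 hk2
        by_contra hcon
        push_neg at hcon
        obtain ⟨j', h1, h2, h3⟩ := CBFS.ivt_up F hstep' c k (2*m+1) hk2 (by omega) (by omega)
        have hji : j' ≤ i := Nat.le_findGreatest (P := fun j => F j = c) h2 h3
        omega
      have hFi1 : F (i+1) = c + 1 :=
        le_antisymm (by have := hstep' i; omega) (hafter (i+1) (by omega) (by omega))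
      have hilen : i < (true::δ).length := by rw [hlen]; omega
      rcases CBFS.take_step (true::δ) i hilen with ⟨he, hdrop⟩ | ⟨he, _⟩
      swap
      · exfalso
        have he' : F (i+1) = F i - 1 := he
        omega
      set t := (true::δ).drop (i+1) with htdef
      have htlen : t.length = 2*m - i := by
        rw [htdef]
        simp only [List.length_drop, List.length_cons] at hlen ⊢
        omega
      have hpre_t : ∀ q, q <+: t → 0 ≤ CBFS.ht q := by
        intro q hq
        have hq2 : q = t.take q.length := List.prefix_iff_eq_take.mp hq
        have hqlen : q.length ≤ t.length := hq.length_le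
        have hta : (true::δ).take (i+1+q.length) = (true::δ).take (i+1) ++ q := by
          rw [List.take_add, ← htdef, ← hq2]
        have h5 : c + 1 ≤ F (i+1+q.length) := hafter _ (by omega) (by omega)
        have h6 : F (i+1+q.length) = F (i+1) + CBFS.ht q := by
          show CBFS.ht ((true::δ).take (i+1+q.length)) = _
          rw [hta, CBFS.ht_append]
        omega
      have hd : CBFS.ht t = c := by
        have hta : (true::δ).take (i+1+t.length) = (true::δ).take (i+1) ++ t := by
          rw [List.take_add, ← htdef, List.take_length]
        have h7 : i + 1 + t.length = 2*m+1 := by omega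
        have h8 : F (2*m+1) = F (i+1) + CBFS.ht t := by
          show CBFS.ht ((true::δ).take (2*m+1)) = _
          rw [← h7, hta, CBFS.ht_append]
        omega
      have hci : c ≤ (i : ℤ) := by
        have h9 : CBFS.ht ((true::δ).take i) ≤ (((true::δ).take i).length : ℤ) :=
          CBFS.ht_le_length _
        have h10 : ((true::δ).take i).length = i := by
          simp only [List.length_take, List.length_cons] at hlen ⊢
          omega
        have h11 : F i = CBFS.ht ((true::δ).take i) := rfl
        rw [h10] at h9
        omega
      set d' := c.toNat with hd'def
      have hd'c : (d' : ℤ) = c := Int.toNat_of_nonneg (by omega)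
      have hpar : CBFS.ht t = (t.length : ℤ) - 2 * t.count false := CBFS.ht_eq t
      obtain ⟨k', hk'⟩ : ∃ k' : ℕ, t.length + d' + 2 * k' = 2 * m := by
        refine ⟨(2*m - t.length - d')/2, ?_⟩
        omega
      obtain ⟨hαd, hαl⟩ := CBFS.extend_dyck t hpre_t d' k' (by rw [hd, hd'c])
      refine ⟨true :: (t ++ (List.replicate d' false ++ CBFS.rep01 k')),
        ⟨t ++ (List.replicate d' false ++ CBFS.rep01 k'), ⟨hαd, by rw [hαl, hk']⟩, rfl⟩,
        Or.inr ⟨true :: t, by simp, List.cons_prefix_cons.mpr ⟨rfl, List.prefix_append t _⟩,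
          ?_, ?_⟩⟩
      · intro h
        apply_fun List.length at h
        simp only [List.length_cons, List.length_append, List.length_replicate,
          CBFS.rep01_length] at h
        omega
      · have := List.drop_suffix i (true::δ)
        rw [hdrop] at this
        exact this
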